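/- In a Riemannian manifold with harmonic curvature (∇_m R_{bcd}^m = 0), the identities R_{am}R_{bce}^m + R_{bm}R_{cae}^m + R_{cm}R_{abe}^m = 0 and R_{am}R_{bec}^m − R_{bm}R_{ace}^m + R_{cm}R_{eba}^m − R_{em}R_{cab}^m = 0 hold. -/

import Mathlib

open Finset

theorem harmonic_curvature_identities {ι : Type*} [Fintype ι] [DecidableEq ι]
    (R : ι → ι → ι → ι → ℝ)            -- R a b c d = R_{abc}{}^d
    (DR : ι → ι → ι → ι → ι → ℝ)        -- DR x a b c d = ∇_x R_{abc}{}^d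
    (D2R : ι → ι → ι → ι → ι → ι → ℝ)   -- D2R x y a b c d = ∇_x ∇_y R_{abc}{}^d
    (hAnti : ∀ a b c d, R a b c d = - R b a c d)
    (hDAnti : ∀ x a b c d, DR x a b c d = - DR x b a c d)
    (hD2Anti : ∀ x y a b c d, D2R x y a b c d = - D2R x y b a c d)
    (hB1 : ∀ a b c d, R a b c d + R b c a d + R c a b d = 0)
    (hB2 : ∀ a b c d e, DR a b c d e + DR b c a d e + DR c a b d e = 0)
    (hDB2 : ∀ x a b c d e,
      D2R x a b c d e + D2R x b c a d e + D2R x c a b d e = 0)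
    (hComm : ∀ x y c d e f,
      D2R x y c d e f - D2R y x c d e f =
        - (∑ k, R x y c k * R k d e f) - (∑ k, R x y d k * R c k e f)
        - (∑ k, R x y e k * R c d k f) + (∑ k, R x y k f * R c d e k))
    (g ginv : ι → ι → ℝ)
    (hg : ∀ a b, g a b = g b a)
    (hginvsym : ∀ a b, ginv a b = ginv b a)
    (hginv : ∀ a b, (∑ m, ginv a m * g m b) = if a = b then (1:ℝ) else 0)
    (hPair : ∀ a b c d, (∑ e, R a b c e * g e d) = ∑ e, R c d a e * g e b)
    (hHarm : ∀ b c d, (∑ m, DR m b c d m) = 0)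
    (hHarm2 : ∀ x b c d, (∑ m, D2R x m b c d m) = 0) :
    (∀ a b c e,
      (∑ m, (∑ k, R a k m k) * R b c e m) + (∑ m, (∑ k, R b k m k) * R c a e m)
      + (∑ m, (∑ k, R c k m k) * R a b e m) = 0)
    ∧ (∀ a b c e,
      (∑ m, (∑ k, R a k m k) * R b e c m) - (∑ m, (∑ k, R b k m k) * R a c e m)
      + (∑ m, (∑ k, R c k m k) * R e b a m) - (∑ m, (∑ k, R e k m k) * R c a b m) = 0) := by
  -- Second-order Codazzi symmetry of the "second covariant derivative of Ricci"
  have codazzi2 : ∀ x b c d, (∑ m, D2R x b c m d m) = (∑ m, D2R x c b m d m) := by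
    intro x b c d
    have h : ∑ m, (D2R x m b c d m + D2R x b c m d m + D2R x c m b d m) = 0 :=
      Finset.sum_eq_zero fun m _ => hDB2 x m b c d m
    have h' : (∑ m, D2R x m b c d m) + (∑ m, D2R x b c m d m)
        + (∑ m, D2R x c m b d m) = 0 := by
      rw [← Finset.sum_add_distrib, ← Finset.sum_add_distrib]; exact h
    have h2 : (∑ m, D2R x c m b d m) = - (∑ m, D2R x c b m d m) := by
      rw [← Finset.sum_neg_distrib]
      exact Finset.sum_congr rfl fun m _ => hD2Anti x c m b d m
    have h3 := hHarm2 x b c d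
    linarith [h', h2, h3]
  -- commutator of contracted second derivatives
  have comm' : ∀ x y c d,
      (∑ m, D2R x y c m d m) - (∑ m, D2R y x c m d m)
        = -(∑ k, R x y c k * (∑ m, R k m d m))
          - (∑ k, R x y d k * (∑ m, R c m k m)) := by
    intro x y c d
    have hL : (∑ m, D2R x y c m d m) - (∑ m, D2R y x c m d m)
        = ∑ m, (D2R x y c m d m - D2R y x c m d m) := (Finset.sum_sub_distrib _ _).symm
    have h : ∑ m, (D2R x y c m d m - D2R y x c m d m)
        = ∑ m, (- (∑ k, R x y c k * R k m d m) - (∑ k, R x y m k * R c k d m)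
            - (∑ k, R x y d k * R c m k m) + (∑ k, R x y k m * R c m d k)) :=
      Finset.sum_congr rfl fun m _ => hComm x y c m d m
    have hR : ∑ m, (- (∑ k, R x y c k * R k m d m) - (∑ k, R x y m k * R c k d m)
            - (∑ k, R x y d k * R c m k m) + (∑ k, R x y k m * R c m d k))
        = -(∑ m, ∑ k, R x y c k * R k m d m) - (∑ m, ∑ k, R x y m k * R c k d m)
          - (∑ m, ∑ k, R x y d k * R c m k m) + (∑ m, ∑ k, R x y k m * R c m d k) := by
      simp [Finset.sum_add_distrib, Finset.sum_sub_distrib]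
    have e24 : (∑ m, ∑ k, R x y m k * R c k d m) = ∑ m, ∑ k, R x y k m * R c m d k :=
      Finset.sum_comm
    have e1 : (∑ m, ∑ k, R x y c k * R k m d m) = ∑ k, R x y c k * (∑ m, R k m d m) := by
      rw [Finset.sum_comm]
      exact Finset.sum_congr rfl fun k _ => (Finset.mul_sum _ _ _).symm
    have e3 : (∑ m, ∑ k, R x y d k * R c m k m) = ∑ k, R x y d k * (∑ m, R c m k m) := by
      rw [Finset.sum_comm]
      exact Finset.sum_congr rfl fun k _ => (Finset.mul_sum _ _ _).symm
    rw [hL, h, hR, e24, e1, e3]; ring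
  -- cyclic sum of the commutators vanishes
  have cyc : ∀ a b c e,
      (-(∑ k, R a b c k * (∑ m, R k m e m)) - (∑ k, R a b e k * (∑ m, R c m k m)))
      + (-(∑ k, R b c a k * (∑ m, R k m e m)) - (∑ k, R b c e k * (∑ m, R a m k m)))
      + (-(∑ k, R c a b k * (∑ m, R k m e m)) - (∑ k, R c a e k * (∑ m, R b m k m)))
        = 0 := by
    intro a b c e
    have h1 := comm' a b c e
    have h2 := comm' b c a e
    have h3 := comm' c a b e
    have c1 := codazzi2 a b c e
    have c2 := codazzi2 b c a e
    have c3 := codazzi2 c a b e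
    linarith [h1, h2, h3, c1, c2, c3]
  -- first identity
  have id1 : ∀ a b c e,
      (∑ m, (∑ k, R a k m k) * R b c e m) + (∑ m, (∑ k, R b k m k) * R c a e m)
      + (∑ m, (∑ k, R c k m k) * R a b e m) = 0 := by
    intro a b c e
    have h := cyc a b c e
    have hz : (∑ k, R a b c k * (∑ m, R k m e m)) + (∑ k, R b c a k * (∑ m, R k m e m))
        + (∑ k, R c a b k * (∑ m, R k m e m)) = 0 := by
      rw [← Finset.sum_add_distrib, ← Finset.sum_add_distrib]
      apply Finset.sum_eq_zero
      intro k _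
      linear_combination (∑ m, R k m e m) * hB1 a b c k
    have r1 : (∑ k, R a b e k * (∑ m, R c m k m)) = ∑ m, (∑ k, R c k m k) * R a b e m :=
      Finset.sum_congr rfl fun k _ => mul_comm _ _
    have r2 : (∑ k, R b c e k * (∑ m, R a m k m)) = ∑ m, (∑ k, R a k m k) * R b c e m :=
      Finset.sum_congr rfl fun k _ => mul_comm _ _
    have r3 : (∑ k, R c a e k * (∑ m, R b m k m)) = ∑ m, (∑ k, R b k m k) * R c a e m :=
      Finset.sum_congr rfl fun k _ => mul_comm _ _
    linarith [h, hz, r1, r2, r3]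
  -- Bianchi contracted against Ricci
  have hBF : ∀ p q r s, (∑ m, (∑ k, R p k m k) * R q r s m)
      + (∑ m, (∑ k, R p k m k) * R r s q m)
      + (∑ m, (∑ k, R p k m k) * R s q r m) = 0 := by
    intro p q r s
    rw [← Finset.sum_add_distrib, ← Finset.sum_add_distrib]
    apply Finset.sum_eq_zero
    intro m _
    linear_combination (∑ k, R p k m k) * hB1 q r s m
  refine ⟨id1, ?_⟩
  intro a b c e
  have i1 := id1 a b e c
  have i2 := id1 c e b a
  have bf_b := hBF b e a c
  have bf_e := hBF e a b c
  linarith [i1, i2, bf_b, bf_e]
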